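/- Let n be even, let 1 ≤ k ≤ n/2, and let r = (r_1,…,r_{2k}) be a strictly increasing 2k-tuple of integers with 1 ≤ r_1 < ⋯ < r_{2k} ≤ n. Then L_r(X_N) = (S(r) − n)/2 + W(r), where X_N = (1, 2, …, n). -/

import Mathlib

open Finset

-- The sign pattern `c_j` of the alternating form `L_r` for a tuple `r` given by its
-- (1-based) entries `r 1, …, r twok`: `c_1 = 1` and, for `1 ≤ j`, `c_{j+1} = c_j` if
-- `j ∈ {r_1,…,r_{twok}}` and `c_{j+1} = −c_j` otherwise.
open Classical in
noncomputable def signPatN (twok : ℕ) (r : ℕ → ℕ) : ℕ → ℤ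
  | 0 => 1
  | 1 => 1
  | (j + 2) =>
    if ∃ i ∈ Finset.Icc 1 twok, r i = j + 1 then signPatN twok r (j + 1)
    else -signPatN twok r (j + 1)

/-- The alternating linear form `L_r(X) = Σ_{j=1}^n c_j x_j`. -/
noncomputable def LformN (n twok : ℕ) (r : ℕ → ℕ) (X : ℕ → ℝ) : ℝ :=
  ∑ j ∈ Finset.Icc 1 n, (signPatN twok r j : ℝ) * X j

/-- Signature `S(r) = Σ_{j=1}^{2k} (−1)^{j+r_j}`. -/
def SigI (k : ℕ) (r : ℕ → ℕ) : ℤ :=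
  ∑ j ∈ Finset.Icc 1 (2 * k), (-1) ^ (j + r j)

/-- Weighted signature `W(r) = Σ_{j=1}^{2k} (−1)^{j+r_j} r_j`. -/
def WsigI (k : ℕ) (r : ℕ → ℕ) : ℤ :=
  ∑ j ∈ Finset.Icc 1 (2 * k), (-1) ^ (j + r j) * (r j : ℤ)

section Aux

variable {k : ℕ} {r : ℕ → ℕ}

private lemma rmono (hinc : ∀ j : ℕ, 1 ≤ j → j < 2 * k → r j < r (j + 1)) :
    ∀ b a, 1 ≤ a → a < b → b ≤ 2 * k → r a < r b := by
  intro b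
  induction b with
  | zero => intro a _ h _; omega
  | succ b ih =>
    intro a ha hab hb
    rcases Nat.lt_or_ge a b with h | h
    · exact lt_trans (ih a ha h (by omega)) (hinc b (by omega) (by omega))
    · have : a = b := by omega
      subst this
      exact hinc a ha (by omega)

private lemma rpos (hinc : ∀ j : ℕ, 1 ≤ j → j < 2 * k → r j < r (j + 1))
    (hlb : 1 ≤ r 1) : ∀ i, 1 ≤ i → i ≤ 2 * k → 1 ≤ r i := by
  intro i hi1 hi2
  rcases Nat.eq_or_lt_of_le hi1 with h | h
  · exact h ▸ hlb
  · have := rmono hinc i 1 le_rfl h hi2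
    omega

private lemma signPat_eq (hinc : ∀ j : ℕ, 1 ≤ j → j < 2 * k → r j < r (j + 1))
    (hlb : 1 ≤ r 1) :
    ∀ j : ℕ, signPatN (2 * k) r (j + 1) =
      (-1 : ℤ) ^ (j + ((Finset.Icc 1 (2 * k)).filter (fun i => r i ≤ j)).card) := by
  intro j
  induction j with
  | zero =>
    have h0 : (Finset.Icc 1 (2 * k)).filter (fun i => r i ≤ 0) = ∅ := by
      rw [Finset.filter_eq_empty_iff]
      intro x hx
      simp only [Finset.mem_Icc] at hx
      have := rpos hinc hlb x hx.1 hx.2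
      omega
    rw [h0]
    simp [signPatN]
  | succ j ih =>
    rw [show j + 1 + 1 = j + 2 by ring, signPatN]
    by_cases hex : ∃ i ∈ Finset.Icc 1 (2 * k), r i = j + 1
    · rw [if_pos hex, ih]
      obtain ⟨i₀, hi₀, hri₀⟩ := hex
      simp only [Finset.mem_Icc] at hi₀
      have hset : (Finset.Icc 1 (2 * k)).filter (fun i => r i ≤ j + 1) =
          insert i₀ ((Finset.Icc 1 (2 * k)).filter (fun i => r i ≤ j)) := by
        ext x
        simp only [Finset.mem_filter, Finset.mem_insert, Finset.mem_Icc]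
        constructor
        · rintro ⟨hx, hxr⟩
          rcases lt_trichotomy x i₀ with h | h | h
          · right
            refine ⟨hx, ?_⟩
            have := rmono hinc i₀ x hx.1 h hi₀.2
            omega
          · left; exact h
          · have := rmono hinc x i₀ hi₀.1 h hx.2
            omega
        · rintro (h | ⟨hx, hxr⟩)
          · subst h; exact ⟨hi₀, by omega⟩
          · exact ⟨hx, by omega⟩
      have hnm : i₀ ∉ (Finset.Icc 1 (2 * k)).filter (fun i => r i ≤ j) := by
        simp only [Finset.mem_filter]
        omega
      rw [hset, Finset.card_insert_of_notMem hnm]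
      rw [show j + 1 + (((Finset.Icc 1 (2 * k)).filter (fun i => r i ≤ j)).card + 1)
          = (j + ((Finset.Icc 1 (2 * k)).filter (fun i => r i ≤ j)).card) + 2 by ring]
      rw [pow_add]
      ring
    · rw [if_neg hex, ih]
      have hset : (Finset.Icc 1 (2 * k)).filter (fun i => r i ≤ j + 1) =
          (Finset.Icc 1 (2 * k)).filter (fun i => r i ≤ j) := by
        apply Finset.filter_congr
        intro x hx
        constructor
        · intro h
          rcases Nat.eq_or_lt_of_le h with h' | h'
          · exact absurd ⟨x, hx, h'⟩ hex
          · omega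
        · omega
      rw [hset]
      rw [show j + 1 + ((Finset.Icc 1 (2 * k)).filter (fun i => r i ≤ j)).card
          = (j + ((Finset.Icc 1 (2 * k)).filter (fun i => r i ≤ j)).card) + 1 by ring]
      rw [pow_succ]
      ring

private lemma key (hinc : ∀ j : ℕ, 1 ≤ j → j < 2 * k → r j < r (j + 1))
    (hlb : 1 ≤ r 1) :
    ∀ m : ℕ, 4 * (∑ j ∈ Finset.Icc 1 m, signPatN (2 * k) r j * (j : ℤ)) =
      1 - signPatN (2 * k) r (m + 1) * (2 * m + 1)
      + 2 * ∑ i ∈ (Finset.Icc 1 (2 * k)).filter (fun i => r i ≤ m),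
            (-1 : ℤ) ^ (i + r i) * (2 * (r i : ℤ) + 1) := by
  intro m
  induction m with
  | zero =>
    have h0 : (Finset.Icc 1 (2 * k)).filter (fun i => r i ≤ 0) = ∅ := by
      rw [Finset.filter_eq_empty_iff]
      intro x hx
      simp only [Finset.mem_Icc] at hx
      have := rpos hinc hlb x hx.1 hx.2
      omega
    rw [h0]
    simp [signPatN]
  | succ m ih =>
    rw [Finset.sum_Icc_succ_top (by omega : 1 ≤ m + 1)]
    rw [show m + 1 + 1 = m + 2 by ring, signPatN]
    by_cases hex : ∃ i ∈ Finset.Icc 1 (2 * k), r i = m + 1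
    · rw [if_pos hex]
      obtain ⟨i₀, hi₀, hri₀⟩ := hex
      simp only [Finset.mem_Icc] at hi₀
      have hset : (Finset.Icc 1 (2 * k)).filter (fun i => r i ≤ m + 1) =
          insert i₀ ((Finset.Icc 1 (2 * k)).filter (fun i => r i ≤ m)) := by
        ext x
        simp only [Finset.mem_filter, Finset.mem_insert, Finset.mem_Icc]
        constructor
        · rintro ⟨hx, hxr⟩
          rcases lt_trichotomy x i₀ with h | h | h
          · right
            refine ⟨hx, ?_⟩
            have := rmono hinc i₀ x hx.1 h hi₀.2
            omega
          · left; exact h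
          · have := rmono hinc x i₀ hi₀.1 h hx.2
            omega
        · rintro (h | ⟨hx, hxr⟩)
          · subst h; exact ⟨hi₀, by omega⟩
          · exact ⟨hx, by omega⟩
      have hnm : i₀ ∉ (Finset.Icc 1 (2 * k)).filter (fun i => r i ≤ m) := by
        simp only [Finset.mem_filter]
        omega
      -- card of filter ≤ m is i₀ - 1
      have hcard : ((Finset.Icc 1 (2 * k)).filter (fun i => r i ≤ m)).card + 1 = i₀ := by
        have h2 : (Finset.Icc 1 (2 * k)).filter (fun i => r i ≤ m + 1) = Finset.Icc 1 i₀ := by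
          ext x
          simp only [Finset.mem_filter, Finset.mem_Icc]
          constructor
          · rintro ⟨hx, hxr⟩
            refine ⟨hx.1, ?_⟩
            by_contra hcon
            have := rmono hinc x i₀ hi₀.1 (by omega) hx.2
            omega
          · rintro ⟨hx1, hx2⟩
            refine ⟨⟨hx1, by omega⟩, ?_⟩
            rcases Nat.eq_or_lt_of_le hx2 with h | h
            · subst h; omega
            · have := rmono hinc i₀ x hx1 h hi₀.2
              omega
        have := congrArg Finset.card (hset.symm.trans h2)
        rw [Finset.card_insert_of_notMem hnm, Nat.card_Icc] at this
        omega
      have hsign : signPatN (2 * k) r (m + 1) = (-1 : ℤ) ^ (i₀ + (m + 1)) := by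
        rw [signPat_eq hinc hlb m]
        rw [show i₀ + (m + 1) = m + ((Finset.Icc 1 (2 * k)).filter (fun i => r i ≤ m)).card + 2
          by omega]
        rw [pow_add]
        ring
      rw [hsign] at ih ⊢
      rw [hset, Finset.sum_insert hnm, hri₀]
      push_cast
      linear_combination ih
    · rw [if_neg hex]
      have hset : (Finset.Icc 1 (2 * k)).filter (fun i => r i ≤ m + 1) =
          (Finset.Icc 1 (2 * k)).filter (fun i => r i ≤ m) := by
        apply Finset.filter_congr
        intro x hx
        constructor
        · intro h
          rcases Nat.eq_or_lt_of_le h with h' | h'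
          · exact absurd ⟨x, hx, h'⟩ hex
          · omega
        · omega
      rw [hset]
      push_cast
      linear_combination ih

end Aux

theorem stmt5 (n k : ℕ) (hne : Even n) (hk1 : 1 ≤ k) (hk2 : k ≤ n / 2)
    (r : ℕ → ℕ)
    (hinc : ∀ j : ℕ, 1 ≤ j → j < 2 * k → r j < r (j + 1))
    (hlb : 1 ≤ r 1) (hub : r (2 * k) ≤ n) :
    LformN n (2 * k) r (fun j => (j : ℝ)) =
      ((SigI k r : ℝ) - n) / 2 + (WsigI k r : ℝ) := by
  have hkey := key hinc hlb n
  have hfull : (Finset.Icc 1 (2 * k)).filter (fun i => r i ≤ n) = Finset.Icc 1 (2 * k) := by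
    rw [Finset.filter_eq_self]
    intro x hx
    simp only [Finset.mem_Icc] at hx
    rcases Nat.eq_or_lt_of_le hx.2 with h | h
    · subst h; omega
    · have := rmono hinc (2 * k) x hx.1 h le_rfl
      omega
  have hsign : signPatN (2 * k) r (n + 1) = 1 := by
    rw [signPat_eq hinc hlb n, hfull, Nat.card_Icc]
    have : Even (n + (2 * k + 1 - 1)) := by
      rcases hne with ⟨t, ht⟩
      exact ⟨t + k, by omega⟩
    exact Even.neg_one_pow this
  rw [hfull, hsign] at hkey
  have hsum : ∑ i ∈ Finset.Icc 1 (2 * k), (-1 : ℤ) ^ (i + r i) * (2 * (r i : ℤ) + 1)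
      = 2 * WsigI k r + SigI k r := by
    rw [WsigI, SigI, Finset.mul_sum, ← Finset.sum_add_distrib]
    apply Finset.sum_congr rfl
    intro i _
    ring
  rw [hsum] at hkey
  have hL : LformN n (2 * k) r (fun j => (j : ℝ))
      = ((∑ j ∈ Finset.Icc 1 n, signPatN (2 * k) r j * (j : ℤ) : ℤ) : ℝ) := by
    rw [LformN]
    push_cast
    rfl
  rw [hL]
  have hkeyR : (4 : ℝ) * ((∑ j ∈ Finset.Icc 1 n, signPatN (2 * k) r j * (j : ℤ) : ℤ) : ℝ)
      = 1 - 1 * (2 * n + 1) + 2 * (2 * (WsigI k r : ℝ) + (SigI k r : ℝ)) := by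
    exact_mod_cast congrArg (fun z : ℤ => (z : ℝ)) hkey
  linarith
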